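/- Let H = ℓ²(ℤ) ⊗ ℂ^{2d} with orthonormal basis {|x↑r⟩, |x↓r⟩ : x ∈ ℤ, r = 1,…,d}, let S_↑ and S_↓ be the partial shifts (S_↑|x↑r⟩ = |x+1↑r⟩, S_↑|x↓r⟩ = |x↓r⟩, S_↓|x↑r⟩ = |x↑r⟩, S_↓|x↓r⟩ = |x−1↓r⟩), and for i = 1,2 let C_i = ⊕_{x∈ℤ} C_{i,x} where each 2d×2d matrix C_{i,x} has d×d blocks C_{i,x} = [[A_{i,x}, B̂_{i,x}],[B_{i,x}, A_{i,x}*]] with A_{i,x} invertible, B_{i,x}* = B_{i,x}, B̂_{i,x} = −A_{i,x} B_{i,x} A_{i,x}⁻¹, and A_{i,x}* A_{i,x} + B_{i,x}² = 1_d. Then the operators γ = ⊕_{x∈ℤ} γ_x with γ_x = [[B_{1,x}, A_{1,x}*],[A_{1,x}, B̂_{1,x}]] acting on the cell H_x = span{|x↑r⟩,|x↓r⟩ : r} and γ̃ = ⊕_{x∈ℤ} γ̃_x with γ̃_x = [[B_{2,x}, A_{2,x}*],[A_{2,x}, B̂_{2,x}]] acting on H̃_x = span{|x−1↓r⟩,|x↑r⟩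 : r} are self-adjoint unitary operators, W = S_↓ C_2 S_↑ C_1 satisfies W = γ̃ γ, and consequently W is unitary and γ is a chiral symmetry of W: γ² = 1 and γWγ* = W*. Moreover each γ_x is traceless. -/
import Mathlib


open Complex Filter Set Metric Matrix

variable {H : Type*} [NormedAddCommGroup H] [InnerProductSpace ℂ H] [CompleteSpace H] {d : ℕ}

local notation "⟪" x ", " y "⟫" => @inner ℂ _ _ x y

section Helpers

variable {H : Type*} [NormedAddCommGroup H] [InnerProductSpace ℂ H] [CompleteSpace H] {d : ℕ}
variable (e : ℤ × Bool × Fin d → H)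

/-- single-band combination -/
noncomputable def sv (y : ℤ) (b : Bool) (M : Matrix (Fin d) (Fin d) ℂ) (r : Fin d) : H :=
  ∑ s, M s r • e (y, b, s)

lemma sv_one (y : ℤ) (b : Bool) (r : Fin d) : sv e y b 1 r = e (y, b, r) := by
  simp [sv, Matrix.one_apply, Finset.sum_ite_eq]

lemma sv_zero (y : ℤ) (b : Bool) (r : Fin d) : sv e y b 0 r = 0 := by
  simp [sv]

lemma sv_add (y : ℤ) (b : Bool) (M N : Matrix (Fin d) (Fin d) ℂ) (r : Fin d) :
    sv e y b (M + N) r = sv e y b M r + sv e y b N r := by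
  simp [sv, Matrix.add_apply, add_smul, Finset.sum_add_distrib]

lemma sum_smul_sv (y : ℤ) (b : Bool) (P M : Matrix (Fin d) (Fin d) ℂ) (r : Fin d) :
    ∑ s, M s r • sv e y b P s = sv e y b (P * M) r := by
  simp only [sv, Finset.smul_sum, smul_smul, Matrix.mul_apply]
  rw [Finset.sum_comm]
  refine Finset.sum_congr rfl fun t _ => ?_
  rw [Finset.sum_smul]
  exact Finset.sum_congr rfl fun s _ => by rw [mul_comm]

lemma map_sv (T : H →L[ℂ] H) {y : ℤ} {b : Bool} {v : Fin d → H}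
    (hT : ∀ s, T (e (y, b, s)) = v s) (M : Matrix (Fin d) (Fin d) ℂ) (r : Fin d) :
    T (sv e y b M r) = ∑ s, M s r • v s := by
  simp [sv, map_sum, _root_.map_smul, hT]

lemma map_sv₂ (T : H →L[ℂ] H) {y y₁ y₂ : ℤ} {b b₁ b₂ : Bool}
    {P Q : Matrix (Fin d) (Fin d) ℂ}
    (hT : ∀ s, T (e (y, b, s)) = sv e y₁ b₁ P s + sv e y₂ b₂ Q s)
    (M : Matrix (Fin d) (Fin d) ℂ) (r : Fin d) :
    T (sv e y b M r) = sv e y₁ b₁ (P * M) r + sv e y₂ b₂ (Q * M) r := by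
  rw [map_sv e T hT, ← sum_smul_sv, ← sum_smul_sv, ← Finset.sum_add_distrib]
  exact Finset.sum_congr rfl fun s _ => smul_add _ _ _

lemma map_sv₁ (T : H →L[ℂ] H) {y y' : ℤ} {b : Bool}
    (hT : ∀ s, T (e (y, b, s)) = e (y', b, s))
    (M : Matrix (Fin d) (Fin d) ℂ) (r : Fin d) :
    T (sv e y b M r) = sv e y' b M r := by
  rw [map_sv e T hT]; rfl

lemma map_pair (T : H →L[ℂ] H) {y₁ y₂ z₁ z₂ : ℤ} {b₁ b₂ c₁ c₂ : Bool}
    {M N P Q R S : Matrix (Fin d) (Fin d) ℂ}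
    (h1 : ∀ s, T (e (y₁, b₁, s)) = sv e z₁ c₁ P s + sv e z₂ c₂ Q s)
    (h2 : ∀ s, T (e (y₂, b₂, s)) = sv e z₁ c₁ R s + sv e z₂ c₂ S s) (r : Fin d) :
    T (sv e y₁ b₁ M r + sv e y₂ b₂ N r)
      = sv e z₁ c₁ (P * M + R * N) r + sv e z₂ c₂ (Q * M + S * N) r := by
  rw [map_add, map_sv₂ e T h1, map_sv₂ e T h2, sv_add, sv_add]
  abel

lemma inner_sv_right (he : Orthonormal ℂ e) (y : ℤ) (b : Bool)
    (M : Matrix (Fin d) (Fin d) ℂ) (r : Fin d) (z : ℤ) (c : Bool) (t : Fin d) :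
    ⟪e (z, c, t), sv e y b M r⟫ = if z = y ∧ c = b then M t r else 0 := by
  have hite := orthonormal_iff_ite.mp he
  simp only [sv, inner_sum, inner_smul_right, hite, Prod.mk.injEq]
  by_cases h1 : z = y
  · by_cases h2 : c = b
    · subst h1; subst h2
      simp [Finset.sum_ite_eq]
    · simp [h2]
  · simp [h1]

lemma inner_sv_left (he : Orthonormal ℂ e) (y : ℤ) (b : Bool)
    (M : Matrix (Fin d) (Fin d) ℂ) (r : Fin d) (z : ℤ) (c : Bool) (t : Fin d) :
    ⟪sv e y b M r, e (z, c, t)⟫ = if z = y ∧ c = b then (starRingEnd ℂ) (M t r) else 0 := by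
  rw [← inner_conj_symm, inner_sv_right e he]
  split <;> simp

lemma ext_dense {F : Type*} [NormedAddCommGroup F] [NormedSpace ℂ F]
    (hspan : (Submodule.span ℂ (Set.range e)).topologicalClosure = ⊤)
    {T T' : H →L[ℂ] F} (h : ∀ p, T (e p) = T' (e p)) : T = T' := by
  have hd : Dense (Submodule.span ℂ (Set.range e) : Set H) :=
    Submodule.dense_iff_topologicalClosure_eq_top.mpr hspan
  refine ContinuousLinearMap.ext_on hd ?_
  rintro x ⟨p, rfl⟩
  exact h p

lemma adjoint_ext
    (hspan : (Submodule.span ℂ (Set.range e)).topologicalClosure = ⊤)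
    {T T' : H →L[ℂ] H}
    (h : ∀ p q, ⟪T (e p), e q⟫ = ⟪e p, T' (e q)⟫) :
    T = ContinuousLinearMap.adjoint T' := by
  rw [ContinuousLinearMap.eq_adjoint_iff]
  have stepA : ∀ p y, ⟪T (e p), y⟫ = ⟪e p, T' y⟫ := by
    intro p y
    have h1 : innerSL ℂ (T (e p)) = (innerSL ℂ (e p)).comp T' := by
      refine ext_dense e hspan fun q => ?_
      simpa using h p q
    simpa using DFunLike.congr_fun h1 y
  intro x y
  have h2 : (innerSL ℂ y).comp T = innerSL ℂ (T' y) := by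
    refine ext_dense e hspan fun p => ?_
    simp only [ContinuousLinearMap.comp_apply, innerSL_apply_apply]
    rw [← inner_conj_symm, stepA p y, inner_conj_symm]
  have h3 := DFunLike.congr_fun h2 x
  simp only [ContinuousLinearMap.comp_apply, innerSL_apply_apply] at h3
  calc ⟪T x, y⟫ = (starRingEnd ℂ) ⟪y, T x⟫ := (inner_conj_symm _ _).symm
    _ = (starRingEnd ℂ) ⟪T' y, x⟫ := by rw [h3]
    _ = ⟪x, T' y⟫ := inner_conj_symm _ _

end Helpers

section MatrixFacts

variable {d : ℕ} {A B Bh : Matrix (Fin d) (Fin d) ℂ}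

lemma cancel_left (hA : IsUnit A) {X Y : Matrix (Fin d) (Fin d) ℂ}
    (h : A * X = A * Y) : X = Y := by
  have h1 : A⁻¹ * A = 1 := Matrix.nonsing_inv_mul A ((Matrix.isUnit_iff_isUnit_det A).mp hA)
  calc X = A⁻¹ * A * X := by rw [h1, one_mul]
    _ = A⁻¹ * (A * X) := by rw [Matrix.mul_assoc]
    _ = A⁻¹ * (A * Y) := by rw [h]
    _ = A⁻¹ * A * Y := by rw [Matrix.mul_assoc]
    _ = Y := by rw [h1, one_mul]

variable (hA : IsUnit A) (hB : B.IsHermitian) (hBh : Bh = -(A * B * A⁻¹))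
  (hn : Aᴴ * A + B * B = 1)

include hA hBh in
lemma fact1 : Bh * A = -(A * B) := by
  have h1 : A⁻¹ * A = 1 := Matrix.nonsing_inv_mul A ((Matrix.isUnit_iff_isUnit_det A).mp hA)
  rw [hBh]
  calc -(A * B * A⁻¹) * A = -(A * B * (A⁻¹ * A)) := by noncomm_ring
    _ = -(A * B) := by rw [h1, mul_one]

include hn in
lemma fact_comm : B * (Aᴴ * A) = (Aᴴ * A) * B := by
  have h1 : Aᴴ * A = 1 - B * B := by rw [← hn]; abel
  rw [h1]; noncomm_ring

include hA hBh hn in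
lemma fact2 : Aᴴ * Bh = -(B * Aᴴ) := by
  have h2 : A * A⁻¹ = 1 := Matrix.mul_nonsing_inv A ((Matrix.isUnit_iff_isUnit_det A).mp hA)
  rw [hBh]
  calc Aᴴ * -(A * B * A⁻¹) = -((Aᴴ * A) * B * A⁻¹) := by noncomm_ring
    _ = -(B * (Aᴴ * A) * A⁻¹) := by rw [← fact_comm hn]
    _ = -(B * Aᴴ * (A * A⁻¹)) := by noncomm_ring
    _ = -(B * Aᴴ) := by rw [h2, mul_one]

include hA hBh in
lemma fact4 : A * B + Bh * A = 0 := by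
  rw [fact1 hA hBh]; abel

include hA hBh hn in
lemma fact5 : B * Aᴴ + Aᴴ * Bh = 0 := by
  rw [fact2 hA hBh hn]; abel

include hA hBh hn in
lemma fact6 : A * Aᴴ + Bh * Bh = 1 := by
  have hdet := (Matrix.isUnit_iff_isUnit_det A).mp hA
  have h1 : A⁻¹ * A = 1 := Matrix.nonsing_inv_mul A hdet
  have h2 : A * A⁻¹ = 1 := Matrix.mul_nonsing_inv A hdet
  have hb : Bh * Bh = A * (B * B) * A⁻¹ := by
    rw [hBh]
    calc -(A * B * A⁻¹) * -(A * B * A⁻¹) = A * B * (A⁻¹ * A) * B * A⁻¹ := by noncomm_ring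
      _ = A * (B * B) * A⁻¹ := by rw [h1]; noncomm_ring
  have ha : A * Aᴴ = A * (Aᴴ * A) * A⁻¹ := by
    calc A * Aᴴ = A * Aᴴ * (A * A⁻¹) := by rw [h2, mul_one]
      _ = A * (Aᴴ * A) * A⁻¹ := by noncomm_ring
  rw [hb, ha]
  calc A * (Aᴴ * A) * A⁻¹ + A * (B * B) * A⁻¹ = A * (Aᴴ * A + B * B) * A⁻¹ := by noncomm_ring
    _ = 1 := by rw [hn, mul_one, h2]

include hA hB hBh hn in
lemma fact7 : Bhᴴ = Bh := by
  have hAH : IsUnit Aᴴ := by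
    rw [← Matrix.star_eq_conjTranspose]; exact hA.star
  have hdetH := (Matrix.isUnit_iff_isUnit_det Aᴴ).mp hAH
  have h2 : Aᴴ * Aᴴ⁻¹ = 1 := Matrix.mul_nonsing_inv Aᴴ hdetH
  refine cancel_left hAH ?_
  have hL : Aᴴ * Bhᴴ = -(B * Aᴴ) := by
    rw [hBh]
    have : (-(A * B * A⁻¹))ᴴ = -(Aᴴ⁻¹ * B * Aᴴ) := by
      simp [Matrix.conjTranspose_mul, Matrix.conjTranspose_nonsing_inv, hB.eq, Matrix.mul_assoc]
    rw [this]
    calc Aᴴ * -(Aᴴ⁻¹ * B * Aᴴ) = -((Aᴴ * Aᴴ⁻¹) * B * Aᴴ) := by noncomm_ring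
      _ = -(B * Aᴴ) := by rw [h2, one_mul]
  show Aᴴ * Bhᴴ = Aᴴ * Bh
  rw [hL, fact2 hA hBh hn]

end MatrixFacts


/-- The cell `H_x = span {|x↑r⟩, |x↓r⟩ : r}` of the lattice Hilbert space
`ℓ²(ℤ) ⊗ ℂ^{2d}` with orthonormal basis `e`, where `true = ↑` and `false = ↓`. -/
def cell (e : ℤ × Bool × Fin d → H) (x : ℤ) : Submodule ℂ H :=
  Submodule.span ℂ (e '' {p : ℤ × Bool × Fin d | p.1 = x})

/-- The shifted cell `H̃_x = span {|x-1,↓,r⟩, |x,↑,r⟩ : r}`. -/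
def tcell (e : ℤ × Bool × Fin d → H) (x : ℤ) : Submodule ℂ H :=
  Submodule.span ℂ (e '' {p : ℤ × Bool × Fin d |
    (p.1 = x - 1 ∧ p.2.1 = false) ∨ (p.1 = x ∧ p.2.1 = true)})

/-- On `H = ℓ²(ℤ) ⊗ ℂ^{2d}` (an abstract Hilbert space with orthonormal
basis `e` indexed by `ℤ × {↑,↓} × {1,…,d}` with dense span), let `S_↑, S_↓` be the
partial shifts and `C₁, C₂` cell-wise coins with blocks `[[A_i, B̂_i],[B_i, A_i*]]`
satisfying `A_i x` invertible, `B_i x` hermitian, `B̂_i x = -A_i x · B_i x · (A_i x)⁻¹`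
and `(A_i x)ᴴ A_i x + (B_i x)² = 1`. Then the cell-wise operator `γ` with blocks
`[[B₁, A₁*],[A₁, B̂₁]]` on `H_x` and the operator `γ̃` with blocks `[[B₂, A₂*],[A₂, B̂₂]]`
on `H̃_x` are self-adjoint unitaries, `W = S_↓ C₂ S_↑ C₁ = γ̃ γ` is unitary, `γ` is a
chiral symmetry of `W` (`γ² = 1`, `γ W γ* = W*`), and each `γ_x` is traceless. -/
theorem statement14
    (hd : 0 < d)
    (e : ℤ × Bool × Fin d → H) (he : Orthonormal ℂ e)
    (hspan : (Submodule.span ℂ (Set.range e)).topologicalClosure = ⊤)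
    (Sup Sdn C₁ C₂ γ γt : H →L[ℂ] H)
    (A₁ B₁ Bhat₁ A₂ B₂ Bhat₂ : ℤ → Matrix (Fin d) (Fin d) ℂ)
    (hA₁ : ∀ x, IsUnit (A₁ x)) (hA₂ : ∀ x, IsUnit (A₂ x))
    (hB₁ : ∀ x, (B₁ x).IsHermitian) (hB₂ : ∀ x, (B₂ x).IsHermitian)
    (hBhat₁ : ∀ x, Bhat₁ x = -(A₁ x * B₁ x * (A₁ x)⁻¹))
    (hBhat₂ : ∀ x, Bhat₂ x = -(A₂ x * B₂ x * (A₂ x)⁻¹))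
    (hnorm₁ : ∀ x, (A₁ x)ᴴ * A₁ x + B₁ x * B₁ x = 1)
    (hnorm₂ : ∀ x, (A₂ x)ᴴ * A₂ x + B₂ x * B₂ x = 1)
    (hSup_up : ∀ x r, Sup (e (x, true, r)) = e (x + 1, true, r))
    (hSup_dn : ∀ x r, Sup (e (x, false, r)) = e (x, false, r))
    (hSdn_up : ∀ x r, Sdn (e (x, true, r)) = e (x, true, r))
    (hSdn_dn : ∀ x r, Sdn (e (x, false, r)) = e (x - 1, false, r))
    (hC₁u : ∀ x r, C₁ (e (x, true, r)) =
      (∑ s, A₁ x s r • e (x, true, s)) + ∑ s, B₁ x s r • e (x, false, s))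
    (hC₁d : ∀ x r, C₁ (e (x, false, r)) =
      (∑ s, Bhat₁ x s r • e (x, true, s)) +
        ∑ s, (starRingEnd ℂ) (A₁ x r s) • e (x, false, s))
    (hC₂u : ∀ x r, C₂ (e (x, true, r)) =
      (∑ s, A₂ x s r • e (x, true, s)) + ∑ s, B₂ x s r • e (x, false, s))
    (hC₂d : ∀ x r, C₂ (e (x, false, r)) =
      (∑ s, Bhat₂ x s r • e (x, true, s)) +
        ∑ s, (starRingEnd ℂ) (A₂ x r s) • e (x, false, s))
    (hγu : ∀ x r, γ (e (x, true, r)) =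
      (∑ s, B₁ x s r • e (x, true, s)) + ∑ s, A₁ x s r • e (x, false, s))
    (hγd : ∀ x r, γ (e (x, false, r)) =
      (∑ s, (starRingEnd ℂ) (A₁ x r s) • e (x, true, s)) +
        ∑ s, Bhat₁ x s r • e (x, false, s))
    (hγtd : ∀ x r, γt (e (x - 1, false, r)) =
      (∑ s, B₂ x s r • e (x - 1, false, s)) + ∑ s, A₂ x s r • e (x, true, s))
    (hγtu : ∀ x r, γt (e (x, true, r)) =
      (∑ s, (starRingEnd ℂ) (A₂ x r s) • e (x - 1, false, s)) +
        ∑ s, Bhat₂ x s r • e (x, true, s)) :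
    IsSelfAdjoint γ ∧ γ ∈ unitary (H →L[ℂ] H) ∧
    IsSelfAdjoint γt ∧ γt ∈ unitary (H →L[ℂ] H) ∧
    Sdn ∘L C₂ ∘L Sup ∘L C₁ = γt ∘L γ ∧
    (Sdn ∘L C₂ ∘L Sup ∘L C₁) ∈ unitary (H →L[ℂ] H) ∧
    γ ∘L γ = 1 ∧
    γ ∘L (Sdn ∘L C₂ ∘L Sup ∘L C₁) ∘L star γ = star (Sdn ∘L C₂ ∘L Sup ∘L C₁) ∧
    (∀ x, (B₁ x).trace + (Bhat₁ x).trace = 0) := by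
  classical
  -- operator actions in `sv` form
  have hγ_t : ∀ x s, γ (e (x, true, s)) = sv e x true (B₁ x) s + sv e x false (A₁ x) s :=
    fun x s => by simpa [sv] using hγu x s
  have hγ_f : ∀ x s, γ (e (x, false, s)) =
      sv e x true ((A₁ x)ᴴ) s + sv e x false (Bhat₁ x) s :=
    fun x s => by simpa [sv, Matrix.conjTranspose_apply] using hγd x s
  have hγt_t : ∀ x s, γt (e (x, true, s)) =
      sv e (x - 1) false ((A₂ x)ᴴ) s + sv e x true (Bhat₂ x) s :=
    fun x s => by simpa [sv, Matrix.conjTranspose_apply] using hγtu x s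
  have hγt_f : ∀ x s, γt (e (x, false, s)) =
      sv e x false (B₂ (x + 1)) s + sv e (x + 1) true (A₂ (x + 1)) s :=
    fun x s => by
      have h := hγtd (x + 1) s
      rw [add_sub_cancel_right] at h
      simpa [sv] using h
  have hγt_f' : ∀ x s, γt (e (x - 1, false, s)) =
      sv e (x - 1) false (B₂ x) s + sv e x true (A₂ x) s :=
    fun x s => by simpa [sv] using hγtd x s
  have hγt_t' : ∀ x s, γt (e (x + 1, true, s)) =
      sv e x false ((A₂ (x + 1))ᴴ) s + sv e (x + 1) true (Bhat₂ (x + 1)) s :=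
    fun x s => by
      have h := hγt_t (x + 1) s
      rwa [add_sub_cancel_right] at h
  have hC₁_t : ∀ x s, C₁ (e (x, true, s)) = sv e x true (A₁ x) s + sv e x false (B₁ x) s :=
    fun x s => by simpa [sv] using hC₁u x s
  have hC₁_f : ∀ x s, C₁ (e (x, false, s)) =
      sv e x true (Bhat₁ x) s + sv e x false ((A₁ x)ᴴ) s :=
    fun x s => by simpa [sv, Matrix.conjTranspose_apply] using hC₁d x s
  have hC₂_t : ∀ x s, C₂ (e (x, true, s)) = sv e x true (A₂ x) s + sv e x false (B₂ x) s :=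
    fun x s => by simpa [sv] using hC₂u x s
  have hC₂_f : ∀ x s, C₂ (e (x, false, s)) =
      sv e x true (Bhat₂ x) s + sv e x false ((A₂ x)ᴴ) s :=
    fun x s => by simpa [sv, Matrix.conjTranspose_apply] using hC₂d x s
  -- matrix facts
  have m1₁ : ∀ x, B₁ x * B₁ x + (A₁ x)ᴴ * A₁ x = 1 := fun x => by
    rw [add_comm]; exact hnorm₁ x
  have m1₂ : ∀ x, B₂ x * B₂ x + (A₂ x)ᴴ * A₂ x = 1 := fun x => by
    rw [add_comm]; exact hnorm₂ x
  have m4₁ : ∀ x, A₁ x * B₁ x + Bhat₁ x * A₁ x = 0 := fun x => fact4 (hA₁ x) (hBhat₁ x)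
  have m4₂ : ∀ x, A₂ x * B₂ x + Bhat₂ x * A₂ x = 0 := fun x => fact4 (hA₂ x) (hBhat₂ x)
  have m5₁ : ∀ x, B₁ x * (A₁ x)ᴴ + (A₁ x)ᴴ * Bhat₁ x = 0 :=
    fun x => fact5 (hA₁ x) (hBhat₁ x) (hnorm₁ x)
  have m5₂ : ∀ x, B₂ x * (A₂ x)ᴴ + (A₂ x)ᴴ * Bhat₂ x = 0 :=
    fun x => fact5 (hA₂ x) (hBhat₂ x) (hnorm₂ x)
  have m6₁ : ∀ x, A₁ x * (A₁ x)ᴴ + Bhat₁ x * Bhat₁ x = 1 :=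
    fun x => fact6 (hA₁ x) (hBhat₁ x) (hnorm₁ x)
  have m6₂ : ∀ x, A₂ x * (A₂ x)ᴴ + Bhat₂ x * Bhat₂ x = 1 :=
    fun x => fact6 (hA₂ x) (hBhat₂ x) (hnorm₂ x)
  have m7₁ : ∀ x, (Bhat₁ x)ᴴ = Bhat₁ x :=
    fun x => fact7 (hA₁ x) (hB₁ x) (hBhat₁ x) (hnorm₁ x)
  have m7₂ : ∀ x, (Bhat₂ x)ᴴ = Bhat₂ x :=
    fun x => fact7 (hA₂ x) (hB₂ x) (hBhat₂ x) (hnorm₂ x)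
  -- hermitian entries
  have eB₁ : ∀ x (i j : Fin d), (starRingEnd ℂ) (B₁ x j i) = B₁ x i j :=
    fun x i j => (hB₁ x).apply i j
  have eB₂ : ∀ x (i j : Fin d), (starRingEnd ℂ) (B₂ x j i) = B₂ x i j :=
    fun x i j => (hB₂ x).apply i j
  have eBh₁ : ∀ x (i j : Fin d), (starRingEnd ℂ) (Bhat₁ x j i) = Bhat₁ x i j := fun x i j => by
    have := congrFun (congrFun (m7₁ x) i) j
    simpa [Matrix.conjTranspose_apply] using this
  have eBh₂ : ∀ x (i j : Fin d), (starRingEnd ℂ) (Bhat₂ x j i) = Bhat₂ x i j := fun x i j => by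
    have := congrFun (congrFun (m7₂ x) i) j
    simpa [Matrix.conjTranspose_apply] using this
  -- γ ∘ γ = 1
  have hγγ : γ ∘L γ = 1 := by
    refine ext_dense e hspan ?_
    rintro ⟨x, b, r⟩
    simp only [ContinuousLinearMap.comp_apply, ContinuousLinearMap.one_apply]
    cases b
    · rw [hγ_f x r, map_pair e γ (hγ_t x) (hγ_f x) r, m5₁ x, m6₁ x, sv_zero, sv_one, zero_add]
    · rw [hγ_t x r, map_pair e γ (hγ_t x) (hγ_f x) r, m1₁ x, m4₁ x, sv_zero, sv_one, add_zero]
  -- γt ∘ γt = 1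
  have hγtγt : γt ∘L γt = 1 := by
    refine ext_dense e hspan ?_
    rintro ⟨x, b, r⟩
    simp only [ContinuousLinearMap.comp_apply, ContinuousLinearMap.one_apply]
    cases b
    · rw [hγt_f x r, map_pair e γt (hγt_f x) (hγt_t' x) r, m1₂ (x + 1), m4₂ (x + 1),
        sv_zero, sv_one, add_zero]
    · rw [hγt_t x r, map_pair e γt (hγt_f' x) (hγt_t x) r, m5₂ x, m6₂ x,
        sv_zero, sv_one, zero_add]
  -- W = γt ∘ γ
  have hW : Sdn ∘L C₂ ∘L Sup ∘L C₁ = γt ∘L γ := by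
    refine ext_dense e hspan ?_
    rintro ⟨x, b, r⟩
    simp only [ContinuousLinearMap.comp_apply]
    cases b
    · rw [hC₁_f x r, map_add, map_sv₁ e Sup (hSup_up x), map_sv₁ e Sup (hSup_dn x),
        map_add, map_sv₂ e C₂ (hC₂_t (x + 1)), map_sv₂ e C₂ (hC₂_f x),
        map_add, map_add, map_add,
        map_sv₁ e Sdn (hSdn_up (x + 1)), map_sv₁ e Sdn (hSdn_dn (x + 1)),
        map_sv₁ e Sdn (hSdn_up x), map_sv₁ e Sdn (hSdn_dn x), add_sub_cancel_right,
        hγ_f x r, map_add, map_sv₂ e γt (hγt_t x), map_sv₂ e γt (hγt_f x)]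
      abel
    · rw [hC₁_t x r, map_add, map_sv₁ e Sup (hSup_up x), map_sv₁ e Sup (hSup_dn x),
        map_add, map_sv₂ e C₂ (hC₂_t (x + 1)), map_sv₂ e C₂ (hC₂_f x),
        map_add, map_add, map_add,
        map_sv₁ e Sdn (hSdn_up (x + 1)), map_sv₁ e Sdn (hSdn_dn (x + 1)),
        map_sv₁ e Sdn (hSdn_up x), map_sv₁ e Sdn (hSdn_dn x), add_sub_cancel_right,
        hγ_t x r, map_add, map_sv₂ e γt (hγt_t x), map_sv₂ e γt (hγt_f x)]
      abel
  -- self-adjointness of γ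
  have keyγ : ∀ p q, ⟪γ (e p), e q⟫ = ⟪e p, γ (e q)⟫ := by
    rintro ⟨x, b, r⟩ ⟨z, c, t⟩
    cases b <;> cases c
    · rw [hγ_f x r, hγ_f z t, inner_add_left, inner_sv_left e he, inner_sv_left e he,
        inner_add_right, inner_sv_right e he, inner_sv_right e he]
      by_cases h : z = x
      · subst h; simp [eBh₁]
      · simp [h, Ne.symm h]
    · rw [hγ_f x r, hγ_t z t, inner_add_left, inner_sv_left e he, inner_sv_left e he,
        inner_add_right, inner_sv_right e he, inner_sv_right e he]
      by_cases h : z = x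
      · subst h; simp [Matrix.conjTranspose_apply]
      · simp [h, Ne.symm h]
    · rw [hγ_t x r, hγ_f z t, inner_add_left, inner_sv_left e he, inner_sv_left e he,
        inner_add_right, inner_sv_right e he, inner_sv_right e he]
      by_cases h : z = x
      · subst h; simp [Matrix.conjTranspose_apply]
      · simp [h, Ne.symm h]
    · rw [hγ_t x r, hγ_t z t, inner_add_left, inner_sv_left e he, inner_sv_left e he,
        inner_add_right, inner_sv_right e he, inner_sv_right e he]
      by_cases h : z = x
      · subst h; simp [eB₁]
      · simp [h, Ne.symm h]
  have hγsa : IsSelfAdjoint γ := by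
    exact ContinuousLinearMap.isSelfAdjoint_iff'.mpr (adjoint_ext e hspan keyγ).symm
  -- self-adjointness of γt
  have keyγt : ∀ p q, ⟪γt (e p), e q⟫ = ⟪e p, γt (e q)⟫ := by
    rintro ⟨x, b, r⟩ ⟨z, c, t⟩
    cases b <;> cases c
    · rw [hγt_f x r, hγt_f z t, inner_add_left, inner_sv_left e he, inner_sv_left e he,
        inner_add_right, inner_sv_right e he, inner_sv_right e he]
      by_cases h : z = x
      · subst h; simp [eB₂]
      · simp [h, Ne.symm h, show ¬(z = x + 1 ∧ False) from by simp, show x + 1 ≠ z + 1 from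
          fun hc => h (by omega)]
    · rw [hγt_f x r, hγt_t z t, inner_add_left, inner_sv_left e he, inner_sv_left e he,
        inner_add_right, inner_sv_right e he, inner_sv_right e he]
      by_cases h : z = x + 1
      · subst h
        have hx : x + 1 - 1 = x := by omega
        simp [hx, Matrix.conjTranspose_apply]
      · have h2 : x ≠ z - 1 := fun hc => h (by omega)
        simp [h, h2]
    · rw [hγt_t x r, hγt_f z t, inner_add_left, inner_sv_left e he, inner_sv_left e he,
        inner_add_right, inner_sv_right e he, inner_sv_right e he]
      by_cases h : z = x - 1
      · subst h
        have hx : x - 1 + 1 = x := by omega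
        simp [hx, Matrix.conjTranspose_apply]
      · have h2 : x ≠ z + 1 := fun hc => h (by omega)
        simp [h, h2]
    · rw [hγt_t x r, hγt_t z t, inner_add_left, inner_sv_left e he, inner_sv_left e he,
        inner_add_right, inner_sv_right e he, inner_sv_right e he]
      by_cases h : z = x
      · subst h; simp [eBh₂]
      · simp [h, Ne.symm h]
  have hγtsa : IsSelfAdjoint γt := by
    exact ContinuousLinearMap.isSelfAdjoint_iff'.mpr (adjoint_ext e hspan keyγt).symm
  -- unitarity
  have hγγ' : γ * γ = 1 := hγγ
  have hγtγt' : γt * γt = 1 := hγtγt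
  have hγmem : γ ∈ unitary (H →L[ℂ] H) := by
    rw [Unitary.mem_iff, hγsa.star_eq]
    exact ⟨hγγ', hγγ'⟩
  have hγtmem : γt ∈ unitary (H →L[ℂ] H) := by
    rw [Unitary.mem_iff, hγtsa.star_eq]
    exact ⟨hγtγt', hγtγt'⟩
  have hWmem : (Sdn ∘L C₂ ∘L Sup ∘L C₁) ∈ unitary (H →L[ℂ] H) := by
    rw [hW]
    exact mul_mem hγtmem hγmem
  have hchiral : γ ∘L (Sdn ∘L C₂ ∘L Sup ∘L C₁) ∘L star γ = star (Sdn ∘L C₂ ∘L Sup ∘L C₁) := by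
    rw [hW, hγsa.star_eq]
    show γ * (γt * γ * γ) = star (γt * γ)
    rw [StarMul.star_mul, hγsa.star_eq, hγtsa.star_eq, mul_assoc γt γ γ, hγγ', mul_one]
  have htr : ∀ x, (B₁ x).trace + (Bhat₁ x).trace = 0 := by
    intro x
    have hdet := (Matrix.isUnit_iff_isUnit_det (A₁ x)).mp (hA₁ x)
    rw [hBhat₁ x, Matrix.trace_neg, Matrix.trace_mul_cycle,
      Matrix.nonsing_inv_mul _ hdet, Matrix.one_mul]
    ring
  exact ⟨hγsa, hγmem, hγtsa, hγtmem, hW, hWmem, hγγ, hchiral, htr⟩
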